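/- Let 0 < q < 1 and d ∈ ℂ. For every nonzero polynomial p ∈ ℂ[x] there exists a unique polynomial P ∈ ℂ[x] with P(0) = 0 such that for all z ∈ ℂ∖{0}: P(η_d(z)) − P(η_d(z/q)) = (η_d(z) − η_d(z/q)) · p(η_{d/q}(z)); moreover deg P = deg p + 1. (Well-definedness of the 'primitive polynomial' map I_λ[p] = P for the q-Racah case.) -/

import Mathlib

open Polynomial Finset

noncomputable def qrW (d : ℂ) : Polynomial ℂ := (1 - X) * (1 - C d * X)
noncomputable def qrWq (q : ℝ) (d : ℂ) : Polynomial ℂ :=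
  (1 - C ((q:ℂ))⁻¹ * X) * (1 - C (d / (q:ℂ)) * X)
noncomputable def qrU (q : ℝ) (d : ℂ) (N k : ℕ) : Polynomial ℂ :=
  ((qrW d)^k - C ((q:ℂ)^k) * (qrWq q d)^k) * X^(N - k)
noncomputable def qrR (q : ℝ) (d : ℂ) : Polynomial ℂ := (1 - X) * (1 - C (d / (q:ℂ)) * X)
noncomputable def qrG (q : ℝ) (d : ℂ) (p : Polynomial ℂ) : Polynomial ℂ :=
  C (1 - (q:ℂ)) * (1 - C (d / (q:ℂ)) * X^2) *
    ∑ j ∈ range (p.natDegree + 1), C (p.coeff j) * X^(p.natDegree - j) * (qrR q d)^j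

lemma qrW_eval (d z : ℂ) : (qrW d).eval z = (1 - z) * (1 - d*z) := by simp [qrW]
lemma qrWq_eval (q : ℝ) (d z : ℂ) :
    (qrWq q d).eval z = (1 - ((q:ℂ))⁻¹*z) * (1 - (d/(q:ℂ))*z) := by simp [qrWq]
lemma qrR_eval (q : ℝ) (d z : ℂ) :
    (qrR q d).eval z = (1 - z) * (1 - (d/(q:ℂ))*z) := by simp [qrR]

lemma eta_mul_z (d z : ℂ) (hz : z ≠ 0) :
    ((z⁻¹ - 1) * (1 - d * z)) * z = (qrW d).eval z := by
  rw [qrW_eval]; field_simp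

lemma etaq_mul_z (q : ℝ) (hq : (q:ℂ) ≠ 0) (d z : ℂ) (hz : z ≠ 0) :
    (((z/(q:ℂ))⁻¹ - 1) * (1 - d * (z/(q:ℂ)))) * z = (q:ℂ) * (qrWq q d).eval z := by
  rw [qrWq_eval]; field_simp

lemma etap_mul_z (q : ℝ) (hq : (q:ℂ) ≠ 0) (d z : ℂ) (hz : z ≠ 0) :
    ((z⁻¹ - 1) * (1 - d * z / (q:ℂ))) * z = (qrR q d).eval z := by
  rw [qrR_eval]; field_simp

lemma qrU_eval (q : ℝ) (hq : (q:ℂ) ≠ 0) (d : ℂ) (N k : ℕ) (hk : k ≤ N) (z : ℂ) (hz : z ≠ 0) :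
    (qrU q d N k).eval z
      = z^N * (((z⁻¹ - 1) * (1 - d * z))^k - (((z/(q:ℂ))⁻¹ - 1) * (1 - d * (z/(q:ℂ))))^k) := by
  apply mul_right_cancel₀ (pow_ne_zero k hz)
  have e1 := eta_mul_z d z hz
  have e2 := etaq_mul_z q hq d z hz
  have lhs : (qrU q d N k).eval z * z^k
      = ((qrW d).eval z ^ k - (q:ℂ)^k * (qrWq q d).eval z ^ k) * z^N := by
    simp only [qrU, eval_mul, eval_sub, eval_pow, eval_C, eval_X]
    rw [mul_assoc, ← pow_add, Nat.sub_add_cancel hk]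
  rw [lhs]
  have : z^N * (((z⁻¹ - 1) * (1 - d * z))^k - (((z/(q:ℂ))⁻¹ - 1) * (1 - d * (z/(q:ℂ))))^k) * z^k
      = z^N * ((((z⁻¹ - 1) * (1 - d * z)) * z)^k - ((((z/(q:ℂ))⁻¹ - 1) * (1 - d * (z/(q:ℂ)))) * z)^k) := by
    rw [mul_pow ((z⁻¹ - 1) * (1 - d * z)) z k,
      mul_pow (((z/(q:ℂ))⁻¹ - 1) * (1 - d * (z/(q:ℂ)))) z k]
    ring
  rw [this, e1, e2]; ring

lemma qrG_eval (q : ℝ) (hq : (q:ℂ) ≠ 0) (d : ℂ) (p : Polynomial ℂ) (z : ℂ) (hz : z ≠ 0) :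
    (qrG q d p).eval z
      = z^(p.natDegree + 1) * (((z⁻¹ - 1) * (1 - d * z)) - (((z/(q:ℂ))⁻¹ - 1) * (1 - d * (z/(q:ℂ)))))
          * p.eval ((z⁻¹ - 1) * (1 - d * z / (q:ℂ))) := by
  set n := p.natDegree
  have e3 : z^(n+1) * (((z⁻¹ - 1) * (1 - d * z)) - (((z/(q:ℂ))⁻¹ - 1) * (1 - d * (z/(q:ℂ)))))
      = (1 - (q:ℂ)) * (1 - (d/(q:ℂ)) * z^2) * z^n := by
    have : z^(n+1) = z^n * z := by ring
    rw [this]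
    have : z ^ n * z * ((z⁻¹ - 1) * (1 - d * z) - ((z / (q:ℂ))⁻¹ - 1) * (1 - d * (z / (q:ℂ))))
        = z ^ n * ((((z⁻¹ - 1) * (1 - d * z)) * z) - ((((z/(q:ℂ))⁻¹ - 1) * (1 - d * (z/(q:ℂ)))) * z)) := by ring
    rw [this, eta_mul_z d z hz, etaq_mul_z q hq d z hz, qrW_eval, qrWq_eval]
    field_simp; ring
  have e4 : z^n * p.eval ((z⁻¹ - 1) * (1 - d * z / (q:ℂ)))
      = ∑ j ∈ range (n + 1), p.coeff j * z^(n - j) * ((qrR q d).eval z)^j := by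
    rw [Polynomial.eval_eq_sum_range (p := p) ((z⁻¹ - 1) * (1 - d * z / (q:ℂ))), Finset.mul_sum]
    apply Finset.sum_congr rfl
    intro j hj
    have hjn : j ≤ n := Nat.lt_succ_iff.mp (Finset.mem_range.mp hj)
    have hzj : z^(n-j) * z^j = z^n := by rw [← pow_add, Nat.sub_add_cancel hjn]
    have e5 : (((z⁻¹ - 1) * (1 - d * z / (q:ℂ))) * z)^j = ((qrR q d).eval z)^j := by
      rw [etap_mul_z q hq d z hz]
    calc z ^ n * (p.coeff j * ((z⁻¹ - 1) * (1 - d * z / (q:ℂ))) ^ j)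
        = p.coeff j * z^(n-j) * ((((z⁻¹ - 1) * (1 - d * z / (q:ℂ)))) * z) ^ j := by
          rw [mul_pow ((z⁻¹ - 1) * (1 - d * z / (q:ℂ))) z j, ← hzj]; ring
      _ = p.coeff j * z^(n-j) * ((qrR q d).eval z)^j := by rw [e5]
  have lhs : (qrG q d p).eval z
      = (1 - (q:ℂ)) * (1 - (d/(q:ℂ)) * z^2) * ∑ j ∈ range (n + 1), p.coeff j * z^(n - j) * ((qrR q d).eval z)^j := by
    simp only [qrG, eval_mul, eval_sub, eval_pow, eval_C, eval_X, eval_one, eval_finset_sum]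
    rfl
  rw [lhs, mul_assoc, ← e4, e3]; ring

lemma qr_one_sub_deg (e : ℂ) : (1 - C e * X : Polynomial ℂ).natDegree ≤ 1 := by
  refine (natDegree_sub_le _ _).trans ?_
  simp [natDegree_one]
  exact (natDegree_C_mul_le e X).trans (le_of_eq natDegree_X)

lemma qr_one_sub_X_deg : (1 - X : Polynomial ℂ).natDegree ≤ 1 := by
  refine (natDegree_sub_le _ _).trans ?_
  simp [natDegree_one, natDegree_X]

lemma qrW_deg (d : ℂ) : (qrW d).natDegree ≤ 2 := by
  refine (natDegree_mul_le).trans ?_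
  have := qr_one_sub_X_deg
  have := qr_one_sub_deg d
  omega

lemma qrWq_deg (q : ℝ) (d : ℂ) : (qrWq q d).natDegree ≤ 2 := by
  refine (natDegree_mul_le).trans ?_
  have := qr_one_sub_deg ((q:ℂ))⁻¹
  have := qr_one_sub_deg (d / (q:ℂ))
  omega

lemma qrR_deg (q : ℝ) (d : ℂ) : (qrR q d).natDegree ≤ 2 := by
  refine (natDegree_mul_le).trans ?_
  have := qr_one_sub_X_deg
  have := qr_one_sub_deg (d / (q:ℂ))
  omega

lemma qrU_coeff_low (q : ℝ) (d : ℂ) (N k : ℕ) (m : ℕ) (hm : m < N - k) :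
    (qrU q d N k).coeff m = 0 := by
  rw [qrU, Polynomial.coeff_mul_X_pow']
  simp [Nat.not_le.mpr hm]

lemma qrU_coeff_diag (q : ℝ) (d : ℂ) (N k : ℕ) :
    (qrU q d N k).coeff (N - k) = 1 - (q:ℂ)^k := by
  rw [qrU, Polynomial.coeff_mul_X_pow']
  simp only [le_refl, if_true, Nat.sub_self]
  rw [Polynomial.coeff_zero_eq_eval_zero]
  simp [qrW, qrWq]

lemma qrU_deg (q : ℝ) (d : ℂ) (N k : ℕ) (hk : k ≤ N) :
    (qrU q d N k).natDegree ≤ 2 * N := by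
  refine (natDegree_mul_le).trans ?_
  have h1 : ((qrW d)^k - C ((q:ℂ)^k) * (qrWq q d)^k).natDegree ≤ 2 * k := by
    refine (natDegree_sub_le _ _).trans ?_
    have h2 : ((qrW d)^k).natDegree ≤ 2*k := (natDegree_pow_le).trans (by
      have := qrW_deg d; nlinarith)
    have h3 : (C ((q:ℂ)^k) * (qrWq q d)^k).natDegree ≤ 2*k := by
      refine (natDegree_C_mul_le _ _).trans ((natDegree_pow_le).trans ?_)
      have := qrWq_deg q d; nlinarith
    omega
  have h4 : (X^(N-k) : Polynomial ℂ).natDegree ≤ N - k := le_of_eq (natDegree_X_pow _)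
  omega

lemma qrG_deg (q : ℝ) (d : ℂ) (p : Polynomial ℂ) :
    (qrG q d p).natDegree ≤ 2 * (p.natDegree + 1) := by
  refine (natDegree_mul_le).trans ?_
  have h1 : (C (1 - (q:ℂ)) * (1 - C (d / (q:ℂ)) * X^2)).natDegree ≤ 2 := by
    refine (natDegree_mul_le).trans ?_
    have h2 : (1 - C (d / (q:ℂ)) * X^2 : Polynomial ℂ).natDegree ≤ 2 := by
      refine (natDegree_sub_le _ _).trans ?_
      simp [natDegree_one]
      exact (natDegree_C_mul_le _ _).trans (le_of_eq (natDegree_X_pow 2))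
    simp [natDegree_C]
    omega
  have h5 : (∑ j ∈ range (p.natDegree + 1), C (p.coeff j) * X^(p.natDegree - j) * (qrR q d)^j).natDegree ≤ 2 * p.natDegree := by
    refine natDegree_sum_le_of_forall_le _ _ ?_
    intro j hj
    have hjn : j ≤ p.natDegree := Nat.lt_succ_iff.mp (mem_range.mp hj)
    refine (natDegree_mul_le).trans ?_
    have ha : (C (p.coeff j) * X^(p.natDegree - j)).natDegree ≤ p.natDegree - j :=
      (natDegree_C_mul_le _ _).trans (le_of_eq (natDegree_X_pow _))
    have hb : ((qrR q d)^j).natDegree ≤ 2*j := (natDegree_pow_le).trans (by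
      have := qrR_deg q d; nlinarith)
    omega
  omega

lemma qrU_deg0 (q : ℝ) (hq : (q:ℂ) ≠ 0) (N k : ℕ) (h1 : 1 ≤ k) (hk : k ≤ N) :
    (qrU q 0 N k).natDegree < N := by
  have hW : qrW 0 = 1 - X := by simp [qrW]
  have hWq : qrWq q 0 = 1 - C ((q:ℂ))⁻¹ * X := by simp [qrWq]
  have hD : (qrW 0)^k - C ((q:ℂ)^k) * (qrWq q 0)^k
      = (1 - X)^k - (C (q:ℂ) - X)^k := by
    rw [hW, hWq]
    congr 1
    rw [C_pow, ← mul_pow]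
    congr 1
    rw [mul_sub, mul_one, ← mul_assoc, ← C_mul, mul_inv_cancel₀ hq, C_1, one_mul]
  have e1 : ((1:Polynomial ℂ) - X) = -(X - C 1) := by rw [C_1]; ring
  have e2 : (C (q:ℂ) - X) = -(X - C (q:ℂ)) := by ring
  have dp : ((1 - X : Polynomial ℂ)^k).degree = (k : WithBot ℕ) := by
    rw [e1, degree_pow, degree_neg, degree_X_sub_C]; simp
  have dq : ((C (q:ℂ) - X)^k).degree = (k : WithBot ℕ) := by
    rw [e2, degree_pow, degree_neg, degree_X_sub_C]; simp
  have lp : ((1 - X : Polynomial ℂ)^k).leadingCoeff = (-1)^k := by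
    rw [e1, leadingCoeff_pow, leadingCoeff_neg, (monic_X_sub_C (1:ℂ)).leadingCoeff]
  have lq : ((C (q:ℂ) - X)^k).leadingCoeff = (-1)^k := by
    rw [e2, leadingCoeff_pow, leadingCoeff_neg, (monic_X_sub_C ((q:ℂ))).leadingCoeff]
  have hp0 : ((1 - X : Polynomial ℂ)^k) ≠ 0 :=
    pow_ne_zero _ (by rw [e1]; exact neg_ne_zero.mpr (X_sub_C_ne_zero 1))
  have hlt : ((1 - X : Polynomial ℂ)^k - (C (q:ℂ) - X)^k).degree < (k : WithBot ℕ) := by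
    have := degree_sub_lt (dp.trans dq.symm) hp0 (lp.trans lq.symm)
    rwa [dp] at this
  have hDdeg : ((qrW 0)^k - C ((q:ℂ)^k) * (qrWq q 0)^k).natDegree < k := by
    rw [hD]
    by_cases h : ((1 - X : Polynomial ℂ)^k - (C (q:ℂ) - X)^k) = 0
    · rw [h]; simpa using (by omega : 0 < k)
    · exact (Polynomial.natDegree_lt_iff_degree_lt h).mpr hlt
  have := natDegree_mul_le (p := (qrW 0)^k - C ((q:ℂ)^k) * (qrWq q 0)^k)
    (q := (X^(N-k) : Polynomial ℂ))
  rw [← qrU] at this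
  have hX : (X^(N-k) : Polynomial ℂ).natDegree = N - k := natDegree_X_pow _
  omega

lemma qrG_deg0 (q : ℝ) (p : Polynomial ℂ) :
    (qrG q 0 p).natDegree ≤ p.natDegree := by
  have hpre : (C (1 - (q:ℂ)) * (1 - C ((0:ℂ) / (q:ℂ)) * X^2)) = C (1 - (q:ℂ)) := by
    simp
  have hR : qrR q 0 = (1 - X) * 1 := by simp [qrR]
  refine (natDegree_mul_le).trans ?_
  have h1 : (C (1 - (q:ℂ)) * (1 - C ((0:ℂ) / (q:ℂ)) * X^2)).natDegree = 0 := by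
    rw [hpre]; exact natDegree_C _
  have h5 : (∑ j ∈ range (p.natDegree + 1),
      C (p.coeff j) * X^(p.natDegree - j) * (qrR q 0)^j).natDegree ≤ p.natDegree := by
    refine natDegree_sum_le_of_forall_le _ _ ?_
    intro j hj
    have hjn : j ≤ p.natDegree := Nat.lt_succ_iff.mp (mem_range.mp hj)
    refine (natDegree_mul_le).trans ?_
    have ha : (C (p.coeff j) * X^(p.natDegree - j)).natDegree ≤ p.natDegree - j :=
      (natDegree_C_mul_le _ _).trans (le_of_eq (natDegree_X_pow _))
    have hb : ((qrR q 0)^j).natDegree ≤ j := by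
      refine (natDegree_pow_le).trans ?_
      have : (qrR q 0).natDegree ≤ 1 := by rw [hR, mul_one]; exact qr_one_sub_X_deg
      nlinarith
    omega
  omega

-- symmetry lemmas for d ≠ 0
lemma qr_sym1 (q : ℝ) (hq : (q:ℂ) ≠ 0) (d : ℂ) (hd : d ≠ 0) (z : ℂ) (hz : z ≠ 0) :
    ((((q:ℂ)/(d*z))⁻¹ - 1) * (1 - d * ((q:ℂ)/(d*z))))
      = ((z/(q:ℂ))⁻¹ - 1) * (1 - d * (z/(q:ℂ))) := by
  field_simp; ring

lemma qr_sym2 (q : ℝ) (hq : (q:ℂ) ≠ 0) (d : ℂ) (hd : d ≠ 0) (z : ℂ) (hz : z ≠ 0) :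
    (((((q:ℂ)/(d*z))/(q:ℂ))⁻¹ - 1) * (1 - d * (((q:ℂ)/(d*z))/(q:ℂ))))
      = (z⁻¹ - 1) * (1 - d * z) := by
  field_simp; ring

lemma qr_sym3 (q : ℝ) (hq : (q:ℂ) ≠ 0) (d : ℂ) (hd : d ≠ 0) (z : ℂ) (hz : z ≠ 0) :
    ((((q:ℂ)/(d*z))⁻¹ - 1) * (1 - d * ((q:ℂ)/(d*z)) / (q:ℂ)))
      = (z⁻¹ - 1) * (1 - d * z / (q:ℂ)) := by
  field_simp; ring

lemma qr_w_ne (q : ℝ) (hq : (q:ℂ) ≠ 0) (d : ℂ) (hd : d ≠ 0) (z : ℂ) (hz : z ≠ 0) :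
    (q:ℂ)/(d*z) ≠ 0 := by
  exact div_ne_zero hq (mul_ne_zero hd hz)

lemma qr_pow_fact (q : ℝ) (hq : (q:ℂ) ≠ 0) (d : ℂ) (hd : d ≠ 0) (z : ℂ) (hz : z ≠ 0) (N : ℕ) :
    ((q:ℂ)/(d*z^2))^N * z^N = ((q:ℂ)/(d*z))^N := by
  rw [← mul_pow]
  congr 1
  field_simp

lemma qrU_sym (q : ℝ) (hq : (q:ℂ) ≠ 0) (d : ℂ) (hd : d ≠ 0) (N k : ℕ) (hk : k ≤ N)
    (z : ℂ) (hz : z ≠ 0) :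
    (qrU q d N k).eval ((q:ℂ)/(d*z)) = -(((q:ℂ)/(d*z^2))^N) * (qrU q d N k).eval z := by
  have hw : (q:ℂ)/(d*z) ≠ 0 := qr_w_ne q hq d hd z hz
  rw [qrU_eval q hq d N k hk _ hw, qrU_eval q hq d N k hk z hz,
    qr_sym1 q hq d hd z hz, qr_sym2 q hq d hd z hz]
  have := qr_pow_fact q hq d hd z hz N
  calc ((q:ℂ)/(d*z))^N * ((((z/(q:ℂ))⁻¹ - 1) * (1 - d * (z/(q:ℂ))))^k - ((z⁻¹ - 1) * (1 - d * z))^k)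
      = -(((q:ℂ)/(d*z^2))^N * z^N) * (((z⁻¹ - 1) * (1 - d * z))^k - (((z/(q:ℂ))⁻¹ - 1) * (1 - d * (z/(q:ℂ))))^k) := by
        rw [this]; ring
    _ = -(((q:ℂ)/(d*z^2))^N) * (z^N * (((z⁻¹ - 1) * (1 - d * z))^k - (((z/(q:ℂ))⁻¹ - 1) * (1 - d * (z/(q:ℂ))))^k)) := by ring

lemma qrG_sym (q : ℝ) (hq : (q:ℂ) ≠ 0) (d : ℂ) (hd : d ≠ 0) (p : Polynomial ℂ)
    (z : ℂ) (hz : z ≠ 0) :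
    (qrG q d p).eval ((q:ℂ)/(d*z)) = -(((q:ℂ)/(d*z^2))^(p.natDegree+1)) * (qrG q d p).eval z := by
  have hw : (q:ℂ)/(d*z) ≠ 0 := qr_w_ne q hq d hd z hz
  rw [qrG_eval q hq d p _ hw, qrG_eval q hq d p z hz,
    qr_sym1 q hq d hd z hz, qr_sym2 q hq d hd z hz, qr_sym3 q hq d hd z hz]
  have := qr_pow_fact q hq d hd z hz (p.natDegree+1)
  calc ((q:ℂ)/(d*z))^(p.natDegree+1) * ((((z/(q:ℂ))⁻¹ - 1) * (1 - d * (z/(q:ℂ)))) - ((z⁻¹ - 1) * (1 - d * z))) * p.eval ((z⁻¹ - 1) * (1 - d * z / (q:ℂ)))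
      = -(((q:ℂ)/(d*z^2))^(p.natDegree+1) * z^(p.natDegree+1)) * (((z⁻¹ - 1) * (1 - d * z)) - (((z/(q:ℂ))⁻¹ - 1) * (1 - d * (z/(q:ℂ))))) * p.eval ((z⁻¹ - 1) * (1 - d * z / (q:ℂ))) := by
        rw [this]; ring
    _ = -(((q:ℂ)/(d*z^2))^(p.natDegree+1)) * (z^(p.natDegree+1) * (((z⁻¹ - 1) * (1 - d * z)) - (((z/(q:ℂ))⁻¹ - 1) * (1 - d * (z/(q:ℂ))))) * p.eval ((z⁻¹ - 1) * (1 - d * z / (q:ℂ)))) := by ring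
lemma qr_solve (N : ℕ) (c : ℕ → ℂ) (U : ℕ → Polynomial ℂ) (B : Polynomial ℂ → Prop)
    (hB0 : ∀ r, B r → (∀ m, m < N → r.coeff m = 0) → r = 0)
    (hBsub : ∀ (r : Polynomial ℂ) (a : ℂ) (k : ℕ), 1 ≤ k → k ≤ N → B r → B (r - C a * U k))
    (hUc : ∀ k, 1 ≤ k → k ≤ N → (U k).coeff (N - k) = c k)
    (hUlow : ∀ k, 1 ≤ k → k ≤ N → ∀ m, m < N - k → (U k).coeff m = 0)
    (hc : ∀ k, 1 ≤ k → k ≤ N → c k ≠ 0) :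
    ∀ k, k ≤ N → ∀ r, B r → (∀ m, m < N - k → r.coeff m = 0) →
      ∃ P : Polynomial ℂ, P.coeff 0 = 0 ∧ P.natDegree ≤ k ∧
        P.coeff k = r.coeff (N - k) / c k ∧
        ∀ z : ℂ, z ≠ 0 → (∑ i ∈ range (N+1), P.coeff i * (U i).eval z) = r.eval z := by
  intro k
  induction k with
  | zero =>
    intro _ r hB hlow
    have hr : r = 0 := hB0 r hB (fun m hm => hlow m (by simpa using hm))
    exact ⟨0, by simp, by simp, by simp [hr], fun z hz => by simp [hr]⟩
  | succ k ih =>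
    intro hk r hB hlow
    set a := r.coeff (N - (k+1)) / c (k+1) with ha
    set r' := r - C a * U (k+1) with hr'
    have hk1 : 1 ≤ k + 1 := Nat.succ_le_succ (Nat.zero_le k)
    have hk' : k ≤ N := le_trans (Nat.le_succ k) hk
    have hB' : B r' := hBsub r a (k+1) hk1 hk hB
    have hNk : N - k = (N - (k+1)) + 1 := by omega
    have hlow' : ∀ m, m < N - k → r'.coeff m = 0 := by
      intro m hm
      rw [hNk] at hm
      rcases Nat.lt_succ_iff_lt_or_eq.mp hm with h | h
      · rw [hr', Polynomial.coeff_sub, Polynomial.coeff_C_mul, hlow m h,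
          hUlow (k+1) hk1 hk m h, mul_zero, sub_zero]
      · subst h
        rw [hr', Polynomial.coeff_sub, Polynomial.coeff_C_mul, hUc (k+1) hk1 hk, ha,
          div_mul_cancel₀ _ (hc (k+1) hk1 hk), sub_self]
    obtain ⟨P', h0, hdeg, _hcoe, hev⟩ := ih hk' r' hB' hlow'
    refine ⟨C a * X^(k+1) + P', ?_, ?_, ?_, ?_⟩
    · rw [Polynomial.coeff_add, h0, Polynomial.coeff_C_mul, Polynomial.coeff_X_pow]
      simp
    · refine (natDegree_add_le _ _).trans (max_le ?_ (le_trans hdeg (Nat.le_succ k)))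
      exact le_trans (natDegree_C_mul_le _ _) (le_of_eq (natDegree_X_pow _))
    · rw [Polynomial.coeff_add, Polynomial.coeff_C_mul, Polynomial.coeff_X_pow,
        Polynomial.coeff_eq_zero_of_natDegree_lt (lt_of_le_of_lt hdeg (Nat.lt_succ_self k))]
      simp [ha]
    · intro z hz
      have hsplit : ∀ i, (C a * X^(k+1) + P').coeff i
          = (if k+1 = i then a else 0) + P'.coeff i := by
        intro i
        rw [Polynomial.coeff_add, Polynomial.coeff_C_mul, Polynomial.coeff_X_pow]
        by_cases h : k + 1 = i
        · simp [h]
        · simp only [if_neg h, mul_zero, zero_add]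
          rw [if_neg (fun hh => h hh.symm), mul_zero, zero_add]
      have : (∑ i ∈ range (N+1), (C a * X^(k+1) + P').coeff i * (U i).eval z)
          = (∑ i ∈ range (N+1), (if k+1 = i then a * (U i).eval z else 0))
            + ∑ i ∈ range (N+1), P'.coeff i * (U i).eval z := by
        rw [← Finset.sum_add_distrib]
        apply Finset.sum_congr rfl
        intro i _
        rw [hsplit i]
        by_cases h : k + 1 = i
        · simp [h]; ring
        · simp [h]
      rw [this, Finset.sum_ite_eq (range (N+1)) (k+1) (fun i => a * (U i).eval z),
        if_pos (mem_range.mpr (Nat.lt_succ_of_le hk)), hev z hz, hr',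
        Polynomial.eval_sub, Polynomial.eval_mul, Polynomial.eval_C]
      ring
lemma qr_B0_ne (q : ℝ) (hq : (q:ℂ) ≠ 0) (d : ℂ) (hd : d ≠ 0) (N : ℕ) (hN : 1 ≤ N)
    (r : Polynomial ℂ) (hdeg : r.natDegree ≤ 2*N)
    (hA : ∀ z : ℂ, z ≠ 0 → r.eval ((q:ℂ)/(d*z)) = -(((q:ℂ)/(d*z^2))^N) * r.eval z)
    (hlow : ∀ m, m < N → r.coeff m = 0) : r = 0 := by
  -- r = X^N * s
  obtain ⟨s, hs⟩ : (X:Polynomial ℂ)^N ∣ r := Polynomial.X_pow_dvd_iff.mpr hlow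
  by_cases hs0 : s = 0
  · rw [hs, hs0, mul_zero]
  exfalso
  have hsN : s.natDegree ≤ N := by
    have hXN : ((X:Polynomial ℂ)^N) ≠ 0 := pow_ne_zero _ X_ne_zero
    have := Polynomial.natDegree_mul hXN hs0
    rw [← hs, natDegree_X_pow] at this
    omega
  -- s (q/(dz)) = - s z
  have hss : ∀ z : ℂ, z ≠ 0 → s.eval ((q:ℂ)/(d*z)) = - s.eval z := by
    intro z hz
    have hw : (q:ℂ)/(d*z) ≠ 0 := div_ne_zero hq (mul_ne_zero hd hz)
    have h1 := hA z hz
    have hre : ∀ w : ℂ, r.eval w = w^N * s.eval w := by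
      intro w; rw [hs]; simp
    rw [hre, hre] at h1
    have h2 : -(((q:ℂ)/(d*z^2))^N) * (z^N * Polynomial.eval z s)
        = ((q:ℂ)/(d*z))^N * (- s.eval z) := by
      have hpf : ((q:ℂ)/(d*z^2))^N * z^N = ((q:ℂ)/(d*z))^N := by
        rw [← mul_pow]; congr 1; field_simp
      calc -(((q:ℂ)/(d*z^2))^N) * (z^N * Polynomial.eval z s)
          = (((q:ℂ)/(d*z^2))^N * z^N) * (- s.eval z) := by ring
        _ = ((q:ℂ)/(d*z))^N * (- s.eval z) := by rw [hpf]
    rw [h2] at h1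
    exact mul_left_cancel₀ (pow_ne_zero N hw) h1
  -- the reversal polynomial
  set t : Polynomial ℂ := ∑ l ∈ range (N+1), C (s.coeff l * ((q:ℂ)/d)^l) * X^(N-l) with ht
  have hteval : ∀ z : ℂ, z ≠ 0 → t.eval z = z^N * s.eval ((q:ℂ)/(d*z)) := by
    intro z hz
    have hsev : s.eval ((q:ℂ)/(d*z)) = ∑ l ∈ range (N+1), s.coeff l * ((q:ℂ)/(d*z))^l :=
      Polynomial.eval_eq_sum_range' (Nat.lt_succ_of_le hsN) _
    rw [hsev, Finset.mul_sum, ht]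
    rw [Polynomial.eval_finset_sum]
    apply Finset.sum_congr rfl
    intro l hl
    have hlN : l ≤ N := Nat.lt_succ_iff.mp (mem_range.mp hl)
    have hzl : z^(N-l) * z^l = z^N := by rw [← pow_add, Nat.sub_add_cancel hlN]
    simp only [Polynomial.eval_mul, Polynomial.eval_C, Polynomial.eval_pow, Polynomial.eval_X]
    have hfrac : ((q:ℂ)/(d*z))^l = ((q:ℂ)/d)^l * (z⁻¹)^l := by
      rw [← mul_pow]; congr 1; field_simp
    rw [hfrac, ← hzl, inv_pow]
    have hzl0 : (z:ℂ)^l ≠ 0 := pow_ne_zero _ hz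
    field_simp
  have hteq : t = -((X:Polynomial ℂ)^N * s) := by
    apply Polynomial.eq_of_infinite_eval_eq
    apply Set.Infinite.mono (s := {(0:ℂ)}ᶜ)
    · intro z hz
      have hz0 : z ≠ 0 := hz
      have := hteval z hz0
      rw [hss z hz0] at this
      simp only [Set.mem_setOf_eq, this]
      simp
    · exact Set.Finite.infinite_compl (Set.finite_singleton 0)
  have htdeg : t.natDegree ≤ N := by
    refine natDegree_sum_le_of_forall_le _ _ ?_
    intro l hl
    refine (natDegree_C_mul_le _ _).trans ?_
    rw [natDegree_X_pow]
    omega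
  -- compare coefficients at N + natDegree s
  by_cases hm : s.natDegree = 0
  · -- s is a nonzero constant
    have hcoeffN : t.coeff N = s.coeff 0 := by
      rw [ht, Polynomial.finset_sum_coeff]
      rw [Finset.sum_eq_single 0]
      · simp
      · intro l hl hl0
        have hlN : l ≤ N := Nat.lt_succ_iff.mp (mem_range.mp hl)
        rw [Polynomial.coeff_C_mul, Polynomial.coeff_X_pow, if_neg (by omega), mul_zero]
      · intro h; exact absurd (mem_range.mpr (Nat.succ_pos N)) h
    have hrcoeffN : (-((X:Polynomial ℂ)^N * s)).coeff N = - s.coeff 0 := by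
      rw [Polynomial.coeff_neg, mul_comm, Polynomial.coeff_mul_X_pow']
      simp
    have hkey : s.coeff 0 = - s.coeff 0 := by
      conv_lhs => rw [← hcoeffN, hteq]
      exact hrcoeffN
    have hzero : s.coeff 0 = 0 := by linear_combination hkey / 2
    exact hs0 (by rw [Polynomial.eq_C_of_natDegree_eq_zero hm, hzero, map_zero])
  · -- natDegree s ≥ 1
    have hm1 : 1 ≤ s.natDegree := Nat.one_le_iff_ne_zero.mpr hm
    have hlc : (-((X:Polynomial ℂ)^N * s)).coeff (N + s.natDegree) = - s.leadingCoeff := by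
      rw [Polynomial.coeff_neg, mul_comm, Polynomial.coeff_mul_X_pow',
        if_pos (Nat.le_add_right _ _), Nat.add_sub_cancel_left]
      rfl
    have htc : t.coeff (N + s.natDegree) = 0 :=
      Polynomial.coeff_eq_zero_of_natDegree_lt (by omega)
    rw [hteq, hlc] at htc
    have := Polynomial.leadingCoeff_ne_zero.mpr hs0
    exact this (by simpa using htc.symm)
lemma qr_unique (q : ℝ) (hq0 : 0 < q) (hq1 : q < 1) (d : ℂ) (Q : Polynomial ℂ)
    (h0 : Q.eval 0 = 0)
    (heq : ∀ z : ℂ, z ≠ 0 →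
      Q.eval ((z⁻¹ - 1) * (1 - d * z))
        = Q.eval (((z/(q:ℂ))⁻¹ - 1) * (1 - d * (z/(q:ℂ))))) :
    Q = 0 := by
  by_contra hQ
  have hq : (q:ℂ) ≠ 0 := by
    simpa using (ne_of_gt hq0)
  set f : ℕ → ℂ := fun k => ((((q:ℂ)^k)⁻¹ - 1) * (1 - d * (q:ℂ)^k)) with hf
  have hu : ∀ k, Q.eval (f k) = 0 := by
    intro k
    induction k with
    | zero => simpa [hf] using h0
    | succ k ihk =>
      have hz : ((q:ℂ)^(k+1)) ≠ 0 := pow_ne_zero _ hq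
      have h := heq ((q:ℂ)^(k+1)) hz
      rw [show ((q:ℂ)^(k+1))/(q:ℂ) = (q:ℂ)^k by rw [pow_succ]; field_simp] at h
      rw [hf]
      simp only
      rw [h]
      exact ihk
  have hroots : {x : ℂ | Q.IsRoot x}.Finite := Polynomial.finite_setOf_isRoot hQ
  have hS : (Set.range f).Finite := hroots.subset (by rintro x ⟨k, rfl⟩; exact hu k)
  obtain ⟨M, hM⟩ := (hS.image norm).bddAbove
  have hbound : ∀ k : ℕ, ((q:ℝ)⁻¹)^k - (‖d‖ + ‖1 + d‖) ≤ ‖f k‖ := by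
    intro k
    have hzk : ((q:ℂ)^k) ≠ 0 := pow_ne_zero _ hq
    have hfe : f k = ((q:ℂ)^k)⁻¹ - ((1 + d) - d * (q:ℂ)^k) := by
      rw [hf]
      field_simp
      ring
    have h1 : ‖((q:ℂ)^k)⁻¹‖ - ‖(1 + d) - d * (q:ℂ)^k‖ ≤ ‖f k‖ := by
      rw [hfe]; exact norm_sub_norm_le _ _
    have h2 : ‖((q:ℂ)^k)⁻¹‖ = ((q:ℝ)⁻¹)^k := by
      rw [norm_inv, norm_pow, Complex.norm_real, Real.norm_eq_abs]
      rw [abs_of_pos hq0, inv_pow]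
    have h3 : ‖(1 + d) - d * (q:ℂ)^k‖ ≤ ‖1 + d‖ + ‖d‖ := by
      refine (norm_sub_le _ _).trans ?_
      have : ‖d * (q:ℂ)^k‖ ≤ ‖d‖ := by
        rw [norm_mul]
        have : ‖(q:ℂ)^k‖ ≤ 1 := by
          rw [norm_pow, Complex.norm_real, Real.norm_eq_abs, abs_of_pos hq0]
          exact pow_le_one₀ (le_of_lt hq0) (le_of_lt hq1)
        nlinarith [norm_nonneg d]
      linarith
    rw [h2] at h1
    linarith
  obtain ⟨k, hk⟩ := pow_unbounded_of_one_lt (M + ‖d‖ + ‖1 + d‖) (show (1:ℝ) < (q:ℝ)⁻¹ by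
    nlinarith [inv_mul_cancel₀ (ne_of_gt hq0), inv_pos.mpr hq0])
  have hfkM : ‖f k‖ ≤ M := hM ⟨f k, ⟨k, rfl⟩, rfl⟩
  have := hbound k
  linarith
lemma qrG_coeff_zero (q : ℝ) (d : ℂ) (p : Polynomial ℂ) :
    (qrG q d p).coeff 0 = (1 - (q:ℂ)) * p.coeff p.natDegree := by
  rw [Polynomial.coeff_zero_eq_eval_zero]
  simp only [qrG, eval_mul, eval_C, eval_sub, eval_one, eval_pow, eval_X,
    Polynomial.eval_finset_sum]
  rw [Finset.sum_eq_single p.natDegree]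
  · simp [qrR]
  · intro j hj hjne
    have h : p.natDegree - j ≠ 0 := by
      have := mem_range.mp hj; omega
    simp [zero_pow h]
  · intro h; exact absurd (mem_range.mpr (Nat.lt_succ_self _)) h


/-- Well-definedness of the 'primitive polynomial' map `I_λ[p] = P` (q-Racah case,
multiplicative variable `z = q^x`, `η_d(z) = (z⁻¹-1)(1-dz)`, `η_{d/q}(z) = (z⁻¹-1)(1-dz/q)`):
for every nonzero `p` there is a unique polynomial `P` with `P(0) = 0` and
`P(η_d(z)) - P(η_d(z/q)) = (η_d(z) - η_d(z/q)) · p(η_{d/q}(z))` for all `z ≠ 0`;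
moreover `deg P = deg p + 1`. -/
theorem qracah_primitive_polynomial (q : ℝ) (hq : 0 < q) (hq1 : q < 1)
    (d : ℂ) (p : Polynomial ℂ) (hp : p ≠ 0) :
    ∃ P : Polynomial ℂ,
      (P.eval 0 = 0 ∧
        ∀ z : ℂ, z ≠ 0 →
          P.eval ((z⁻¹ - 1) * (1 - d * z))
              - P.eval (((z / (q : ℂ))⁻¹ - 1) * (1 - d * (z / (q : ℂ))))
            = (((z⁻¹ - 1) * (1 - d * z)) - (((z / (q : ℂ))⁻¹ - 1) * (1 - d * (z / (q : ℂ)))))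
                * p.eval ((z⁻¹ - 1) * (1 - d * z / (q : ℂ))))
      ∧ P.natDegree = p.natDegree + 1
      ∧ ∀ P' : Polynomial ℂ,
          (P'.eval 0 = 0 ∧
            ∀ z : ℂ, z ≠ 0 →
              P'.eval ((z⁻¹ - 1) * (1 - d * z))
                  - P'.eval (((z / (q : ℂ))⁻¹ - 1) * (1 - d * (z / (q : ℂ))))
                = (((z⁻¹ - 1) * (1 - d * z)) - (((z / (q : ℂ))⁻¹ - 1) * (1 - d * (z / (q : ℂ)))))
                    * p.eval ((z⁻¹ - 1) * (1 - d * z / (q : ℂ)))) → P' = P := by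
  have hqc : (q:ℂ) ≠ 0 := by simpa using (ne_of_gt hq)
  set n := p.natDegree with hn
  set N := n + 1 with hN
  have hNn : 1 ≤ N := by omega
  -- nonvanishing of 1 - q^k
  have hc : ∀ k : ℕ, 1 ≤ k → k ≤ N → (1 - (q:ℂ)^k) ≠ 0 := by
    intro k hk1 _ h
    have h1 : (1:ℂ) = (q:ℂ)^k := sub_eq_zero.mp h
    have h2 : (q:ℝ)^k = 1 := by exact_mod_cast h1.symm
    have h3 : (q:ℝ)^k < 1 := pow_lt_one₀ (le_of_lt hq) hq1 (by omega)
    linarith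
  -- the B-package
  obtain ⟨B, hBG, hB0, hBsub⟩ :
      ∃ B : Polynomial ℂ → Prop, B (qrG q d p) ∧
        (∀ r, B r → (∀ m, m < N → r.coeff m = 0) → r = 0) ∧
        (∀ (r : Polynomial ℂ) (a : ℂ) (k : ℕ), 1 ≤ k → k ≤ N → B r →
          B (r - Polynomial.C a * qrU q d N k)) := by
    by_cases hd : d = 0
    · subst hd
      refine ⟨fun r => r.natDegree < N, Nat.lt_succ_of_le (qrG_deg0 q p), ?_, ?_⟩
      · intro r hB hcoef
        by_contra hr0
        exact (Polynomial.leadingCoeff_ne_zero.mpr hr0) (hcoef _ hB)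
      · intro r a k hk1 hkN hB
        refine (natDegree_sub_le _ _).trans_lt (max_lt hB ?_)
        exact (natDegree_C_mul_le _ _).trans_lt (qrU_deg0 q hqc N k hk1 hkN)
    · refine ⟨fun r => r.natDegree ≤ 2*N ∧
        ∀ z : ℂ, z ≠ 0 → r.eval ((q:ℂ)/(d*z)) = -(((q:ℂ)/(d*z^2))^N) * r.eval z,
        ⟨qrG_deg q d p, fun z hz => qrG_sym q hqc d hd p z hz⟩, ?_, ?_⟩
      · intro r hB hcoef
        exact qr_B0_ne q hqc d hd N hNn r hB.1 hB.2 hcoef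
      · intro r a k hk1 hkN hB
        constructor
        · exact (natDegree_sub_le _ _).trans
            (max_le hB.1 ((natDegree_C_mul_le _ _).trans (qrU_deg q d N k hkN)))
        · intro z hz
          rw [Polynomial.eval_sub, Polynomial.eval_sub, Polynomial.eval_mul,
            Polynomial.eval_mul, Polynomial.eval_C, Polynomial.eval_C,
            hB.2 z hz, qrU_sym q hqc d hd N k hkN z hz]
          ring
  -- solve the triangular system
  obtain ⟨P, hP0, hPdeg, hPcoef, hPev⟩ :=
    qr_solve N (fun k => 1 - (q:ℂ)^k) (qrU q d N) B hB0 hBsub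
      (fun k _ _ => qrU_coeff_diag q d N k)
      (fun k _ _ m hm => qrU_coeff_low q d N k m hm)
      hc N (le_refl N) (qrG q d p) hBG
      (fun m hm => absurd hm (by omega))
  have hP0eval : P.eval 0 = 0 := by
    rw [← Polynomial.coeff_zero_eq_eval_zero]; exact hP0
  have hPcoefN : P.coeff N ≠ 0 := by
    rw [hPcoef, Nat.sub_self, qrG_coeff_zero q d p]
    refine div_ne_zero (mul_ne_zero ?_ (Polynomial.leadingCoeff_ne_zero.mpr hp)) (hc N hNn (le_refl N))
    intro h
    have h1 : (1:ℂ) = (q:ℂ) := sub_eq_zero.mp h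
    have h2 : (q:ℝ) = 1 := by exact_mod_cast h1.symm
    linarith
  have hPdegE : P.natDegree = n + 1 := le_antisymm hPdeg (Polynomial.le_natDegree_of_ne_zero hPcoefN)
  have hfunc : ∀ z : ℂ, z ≠ 0 →
      P.eval ((z⁻¹ - 1) * (1 - d * z))
          - P.eval (((z / (q : ℂ))⁻¹ - 1) * (1 - d * (z / (q : ℂ))))
        = (((z⁻¹ - 1) * (1 - d * z)) - (((z / (q : ℂ))⁻¹ - 1) * (1 - d * (z / (q : ℂ)))))
            * p.eval ((z⁻¹ - 1) * (1 - d * z / (q : ℂ))) := by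
    intro z hz
    have hNP : P.natDegree < N + 1 := by omega
    have hL : z^N * (P.eval ((z⁻¹ - 1) * (1 - d * z))
        - P.eval (((z / (q : ℂ))⁻¹ - 1) * (1 - d * (z / (q : ℂ)))))
        = ∑ i ∈ range (N+1), P.coeff i * (qrU q d N i).eval z := by
      rw [Polynomial.eval_eq_sum_range' hNP ((z⁻¹ - 1) * (1 - d * z)),
        Polynomial.eval_eq_sum_range' hNP (((z / (q : ℂ))⁻¹ - 1) * (1 - d * (z / (q : ℂ)))),
        ← Finset.sum_sub_distrib, Finset.mul_sum]
      apply Finset.sum_congr rfl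
      intro i hi
      rw [qrU_eval q hqc d N i (Nat.lt_succ_iff.mp (mem_range.mp hi)) z hz]
      ring
    have hR := qrG_eval q hqc d p z hz
    have hmid := hPev z hz
    have hfin : z^N * (P.eval ((z⁻¹ - 1) * (1 - d * z))
        - P.eval (((z / (q : ℂ))⁻¹ - 1) * (1 - d * (z / (q : ℂ)))))
        = z^N * ((((z⁻¹ - 1) * (1 - d * z)) - (((z / (q : ℂ))⁻¹ - 1) * (1 - d * (z / (q : ℂ)))))
            * p.eval ((z⁻¹ - 1) * (1 - d * z / (q : ℂ)))) := by
      rw [hL, hmid, hR, ← hn, ← hN]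
      ring
    exact mul_left_cancel₀ (pow_ne_zero N hz) hfin
  refine ⟨P, ⟨hP0eval, hfunc⟩, hPdegE, ?_⟩
  rintro P' ⟨h0', heq'⟩
  have hQ : P' - P = 0 := by
    refine qr_unique q hq hq1 d (P' - P) (by simp [h0', hP0eval]) ?_
    intro z hz
    have a := heq' z hz
    have b := hfunc z hz
    simp only [Polynomial.eval_sub]
    linear_combination a - b
  exact sub_eq_zero.mp hQ
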